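/- Let L be a generator (Markov rate matrix) on a finite state space Ω with reversible probability measure μ, and let (S_t)_{t≥0} = (e^{tL})_{t≥0} be the associated semigroup. Suppose g : Ω → ℝ with E_μ[g] = 0 satisfies: there exist λ > 0, and a nonnegative function h : Ω → ℝ with |g| ≤ C·h pointwise for some C > 0, such that S_t applied from any state contracts E[h] at rate λ, i.e., for all states ω and t ≥ 0, E_ω[h(ω_t)] ≤ e^{−λ t} h(ω). If moreover L g = −λ' g for some λ' > 0 and g is not identically zero, then λ' ≥ λ. -/

import Mathlib

open Finset Matrix

section ChenWangAux

open NormedSpace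

variable {Ω : Type*} [Fintype Ω] [DecidableEq Ω]

/-- The exponential series of a real matrix converges to its exponential. -/
private lemma cw_hasSum_exp (A : Matrix Ω Ω ℝ) :
    HasSum (fun n : ℕ => ((n.factorial : ℝ))⁻¹ • A ^ n) (NormedSpace.exp A) := by
  letI : SeminormedRing (Matrix Ω Ω ℝ) := Matrix.linftyOpSemiNormedRing
  letI : NormedRing (Matrix Ω Ω ℝ) := Matrix.linftyOpNormedRing
  letI : NormedAlgebra ℝ (Matrix Ω Ω ℝ) := Matrix.linftyOpNormedAlgebra
  rw [NormedSpace.exp_eq_tsum ℝ]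
  exact (NormedSpace.expSeries_summable' (𝕂 := ℝ) A).hasSum

/-- Entry evaluation as a linear map. -/
private def cw_entryLM (i j : Ω) : Matrix Ω Ω ℝ →ₗ[ℝ] ℝ where
  toFun M := M i j
  map_add' _ _ := rfl
  map_smul' _ _ := rfl

private lemma cw_hasSum_entry (A : Matrix Ω Ω ℝ) (i j : Ω) :
    HasSum (fun n : ℕ => ((n.factorial : ℝ))⁻¹ * (A ^ n) i j) (NormedSpace.exp A i j) := by
  have := (cw_hasSum_exp A).mapL (LinearMap.toContinuousLinearMap (cw_entryLM i j))
  simp [cw_entryLM] at this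
  exact this

private lemma cw_pow_nonneg {A : Matrix Ω Ω ℝ} (hA : ∀ i j, 0 ≤ A i j) (n : ℕ) :
    ∀ i j, 0 ≤ (A ^ n) i j := by
  induction n with
  | zero => intro i j; by_cases hij : i = j <;> simp [pow_zero, Matrix.one_apply, hij]
  | succ n ih =>
    intro i j
    rw [pow_succ, Matrix.mul_apply]
    exact Finset.sum_nonneg fun k _ => mul_nonneg (ih i k) (hA k j)

/-- The exponential of an entrywise nonnegative matrix is entrywise nonnegative. -/
private lemma cw_exp_nonneg {A : Matrix Ω Ω ℝ} (hA : ∀ i j, 0 ≤ A i j) (i j : Ω) :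
    0 ≤ NormedSpace.exp A i j :=
  (cw_hasSum_entry A i j).nonneg fun n =>
    mul_nonneg (inv_nonneg.2 (Nat.cast_nonneg _)) (cw_pow_nonneg hA n i j)

/-- Exponential of a scalar multiple of the identity. -/
private lemma cw_exp_smul_one (r : ℝ) :
    NormedSpace.exp (r • (1 : Matrix Ω Ω ℝ)) = Real.exp r • (1 : Matrix Ω Ω ℝ) := by
  have hv : NormedSpace.exp ((fun _ => r) : Ω → ℝ) = fun _ : Ω => Real.exp r := by
    rw [Pi.exp_def]
    funext i
    exact (congrFun Real.exp_eq_exp_ℝ r).symm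
  rw [Matrix.smul_one_eq_diagonal, Matrix.exp_diagonal, hv, ← Matrix.smul_one_eq_diagonal]

/-- If `g` is an eigenvector of `L` with eigenvalue `c`, then it is an eigenvector of
`exp L` with eigenvalue `exp c`. -/
private lemma cw_exp_mulVec_eig (L : Matrix Ω Ω ℝ) (g : Ω → ℝ) (c : ℝ)
    (hg : L.mulVec g = c • g) :
    (NormedSpace.exp L).mulVec g = Real.exp c • g := by
  let F : Matrix Ω Ω ℝ →ₗ[ℝ] (Ω → ℝ) :=
    { toFun := fun M => M.mulVec g
      map_add' := fun M N => Matrix.add_mulVec M N g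
      map_smul' := fun r M => Matrix.smul_mulVec r M g }
  have hpow : ∀ n : ℕ, (L ^ n).mulVec g = (c ^ n) • g := by
    intro n
    induction n with
    | zero => simp [pow_zero, Matrix.one_mulVec]
    | succ n ih =>
      rw [pow_succ, pow_succ, ← Matrix.mulVec_mulVec, hg, Matrix.mulVec_smul, ih,
        smul_smul, mul_comm]
  have h1 := (cw_hasSum_exp L).mapL (LinearMap.toContinuousLinearMap F)
  have h1' : HasSum (fun n : ℕ => (((n.factorial : ℝ))⁻¹ * c ^ n) • g)
      ((NormedSpace.exp L).mulVec g) := by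
    refine h1.congr_fun fun n => ?_
    simp [F, Matrix.smul_mulVec, hpow, smul_smul]
  have hs : HasSum (fun n : ℕ => ((n.factorial : ℝ))⁻¹ • c ^ n) (Real.exp c) := by
    rw [Real.exp_eq_exp_ℝ, NormedSpace.exp_eq_tsum ℝ]
    exact (NormedSpace.expSeries_summable' (𝕂 := ℝ) c).hasSum
  exact h1'.unique (hs.smul_const g)

end ChenWangAux

/-- Chen–Wang type argument: if an eigenfunction `g` of a reversible Markov
generator `L` (with eigenvalue `-λ'`) is dominated by a nonnegative function
`h` whose expectation contracts at rate `λ` under the semigroup `e^{tL}`,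
then `λ' ≥ λ`. -/
theorem chen_wang_eigenvalue_lower_bound {Ω : Type*} [Fintype Ω] [DecidableEq Ω] [Nonempty Ω]
    (L : Matrix Ω Ω ℝ) (μ : Ω → ℝ)
    (hμpos : ∀ ω, 0 < μ ω) (hμ1 : ∑ ω, μ ω = 1)
    (hoffdiag : ∀ ω ω', ω ≠ ω' → 0 ≤ L ω ω')
    (hrow : ∀ ω, ∑ ω', L ω ω' = 0)
    (hrev : ∀ ω ω', μ ω * L ω ω' = μ ω' * L ω' ω)
    (g : Ω → ℝ) (hgmean : ∑ ω, μ ω * g ω = 0) (hgne : g ≠ 0)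
    (lam : ℝ) (hlam : 0 < lam) (C : ℝ) (hC : 0 < C)
    (h : Ω → ℝ) (hh : ∀ ω, 0 ≤ h ω) (hgh : ∀ ω, |g ω| ≤ C * h ω)
    (hcontr : ∀ ω, ∀ t : ℝ, 0 ≤ t →
      (NormedSpace.exp (t • L)).mulVec h ω ≤ Real.exp (-(lam * t)) * h ω)
    (lam' : ℝ) (hlam' : 0 < lam') (heig : L.mulVec g = (-lam') • g) :
    lam ≤ lam' := by
  by_contra hlt
  push_neg at hlt
  obtain ⟨ω0, hω0⟩ : ∃ ω, g ω ≠ 0 := by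
    by_contra hng; push_neg at hng; exact hgne (funext fun ω => hng ω)
  set cst : ℝ := ∑ ω', |L ω' ω'| with hcst
  have hcnonneg : 0 ≤ cst := Finset.sum_nonneg fun _ _ => abs_nonneg _
  -- entries of L + cst • 1 are nonnegative
  have hAnn : ∀ i j, 0 ≤ (L + cst • (1 : Matrix Ω Ω ℝ)) i j := by
    intro i j
    by_cases hij : i = j
    · subst hij
      have h1 : |L i i| ≤ cst :=
        Finset.single_le_sum (fun k _ => abs_nonneg (L k k)) (Finset.mem_univ i)
      have h2 : -L i i ≤ |L i i| := neg_le_abs _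
      simp only [Matrix.add_apply, Matrix.smul_apply, Matrix.one_apply_eq, smul_eq_mul, mul_one]
      linarith
    · simp only [Matrix.add_apply, Matrix.smul_apply, Matrix.one_apply_ne hij, smul_eq_mul,
        mul_zero, add_zero]
      exact hoffdiag i j hij
  -- positivity of entries of exp (t • L) for t ≥ 0
  have hposmat : ∀ t : ℝ, 0 ≤ t → ∀ i j, 0 ≤ NormedSpace.exp (t • L) i j := by
    intro t ht i j
    have hc : Commute (t • (L + cst • (1 : Matrix Ω Ω ℝ)))
        ((-(t * cst)) • (1 : Matrix Ω Ω ℝ)) := (Commute.one_right _).smul_right _ |>.smul_left _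
    have hdecomp : t • L =
        t • (L + cst • (1 : Matrix Ω Ω ℝ)) + (-(t * cst)) • (1 : Matrix Ω Ω ℝ) := by
      rw [smul_add, smul_smul, add_assoc, ← add_smul]; simp
    have hsplit : NormedSpace.exp (t • L) =
        NormedSpace.exp (t • (L + cst • (1 : Matrix Ω Ω ℝ))) *
          (Real.exp (-(t * cst)) • (1 : Matrix Ω Ω ℝ)) := by
      rw [hdecomp, Matrix.exp_add_of_commute _ _ hc, cw_exp_smul_one]
    have hAnn' : ∀ i j, 0 ≤ (t • (L + cst • (1 : Matrix Ω Ω ℝ))) i j := fun i j =>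
      mul_nonneg ht (hAnn i j)
    have := cw_exp_nonneg hAnn' i j
    rw [hsplit, mul_smul_comm, mul_one]
    exact mul_nonneg (Real.exp_nonneg _) this
  -- the eigenvalue relation for the semigroup
  have hsemig : ∀ t : ℝ,
      (NormedSpace.exp (t • L)).mulVec g = Real.exp (-(lam' * t)) • g := by
    intro t
    refine cw_exp_mulVec_eig (t • L) g (-(lam' * t)) ?_
    rw [Matrix.smul_mulVec, heig, smul_smul]
    congr 1
    ring
  -- the key decay inequality at ω0
  have hkey : ∀ t : ℝ, 0 ≤ t →
      Real.exp (-(lam' * t)) * |g ω0| ≤ C * (Real.exp (-(lam * t)) * h ω0) := by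
    intro t ht
    have h1 : |((NormedSpace.exp (t • L)).mulVec g) ω0| ≤
        C * ((NormedSpace.exp (t • L)).mulVec h) ω0 := by
      rw [Matrix.mulVec, Matrix.mulVec, dotProduct, dotProduct, Finset.mul_sum]
      refine (Finset.abs_sum_le_sum_abs _ _).trans (Finset.sum_le_sum fun ω' _ => ?_)
      rw [abs_mul, abs_of_nonneg (hposmat t ht ω0 ω')]
      calc NormedSpace.exp (t • L) ω0 ω' * |g ω'|
          ≤ NormedSpace.exp (t • L) ω0 ω' * (C * h ω') :=
            mul_le_mul_of_nonneg_left (hgh ω') (hposmat t ht ω0 ω')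
        _ = C * (NormedSpace.exp (t • L) ω0 ω' * h ω') := by ring
    rw [hsemig t] at h1
    have h2 : |(Real.exp (-(lam' * t)) • g) ω0| = Real.exp (-(lam' * t)) * |g ω0| := by
      simp [Pi.smul_apply, abs_mul, abs_of_pos (Real.exp_pos _)]
    rw [h2] at h1
    refine h1.trans ?_
    exact mul_le_mul_of_nonneg_left (hcontr ω0 t ht) (le_of_lt hC)
  -- derive a contradiction by taking t large
  have habs : 0 < |g ω0| := abs_pos.2 hω0
  have hKpos : 0 < C * h ω0 := lt_of_lt_of_le habs (hgh ω0)
  set d : ℝ := lam - lam' with hd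
  have hdpos : 0 < d := by simp [hd]; linarith
  set t0 : ℝ := (Real.log (C * h ω0) - Real.log |g ω0| + 1) / d with ht0def
  have hlogle : Real.log |g ω0| ≤ Real.log (C * h ω0) :=
    Real.log_le_log habs (hgh ω0)
  have ht0 : 0 ≤ t0 := by
    apply div_nonneg _ (le_of_lt hdpos)
    linarith
  have := hkey t0 ht0
  -- multiply through by exp (lam * t0)
  have hmul : Real.exp (d * t0) * |g ω0| ≤ C * h ω0 := by
    have hE : 0 < Real.exp (lam * t0) := Real.exp_pos _
    have h3 : Real.exp (lam * t0) * (Real.exp (-(lam' * t0)) * |g ω0|) ≤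
        Real.exp (lam * t0) * (C * (Real.exp (-(lam * t0)) * h ω0)) :=
      mul_le_mul_of_nonneg_left this (le_of_lt hE)
    calc Real.exp (d * t0) * |g ω0|
        = Real.exp (lam * t0) * (Real.exp (-(lam' * t0)) * |g ω0|) := by
          rw [← mul_assoc, ← Real.exp_add, hd]; ring_nf
      _ ≤ Real.exp (lam * t0) * (C * (Real.exp (-(lam * t0)) * h ω0)) := h3
      _ = (Real.exp (lam * t0) * Real.exp (-(lam * t0))) * (C * h ω0) := by ring
      _ = C * h ω0 := by rw [← Real.exp_add]; simp
  have hdt0 : d * t0 = Real.log (C * h ω0) - Real.log |g ω0| + 1 := by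
    rw [ht0def]; field_simp
  rw [hdt0, Real.exp_add, Real.exp_sub, Real.exp_log hKpos, Real.exp_log habs] at hmul
  have hexp1 : (2 : ℝ) ≤ Real.exp 1 := by
    have := Real.add_one_le_exp (1 : ℝ); linarith
  have : C * h ω0 / |g ω0| * Real.exp 1 * |g ω0| = C * h ω0 * Real.exp 1 := by
    field_simp
  rw [this] at hmul
  nlinarith
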